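/- For any g ∈ G = G₁ *_H G₂ (with f defined via a-segment counts), f(g⁻¹) satisfies d_k(g⁻¹) = −d_k(g) for all k; in particular f(g⁻¹) = f(g). -/

import Mathlib

open scoped Pointwise

/-- `x` and `y` lie in different factors. -/
def InDiffFactors {G : Type*} [Group G] (G₁ G₂ : Subgroup G) (x y : G) : Prop :=
  ¬(x ∈ G₁ ∧ y ∈ G₁) ∧ ¬(x ∈ G₂ ∧ y ∈ G₂)

/-- A reduced word in an (internal) amalgamated free product of `G₁` and `G₂` over `H`. -/
def ReducedWord' {G : Type*} [Group G] (G₁ G₂ H : Subgroup G) (w : List G) : Prop :=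
  (∀ x ∈ w, x ∈ (G₁ : Set G) ∪ (G₂ : Set G)) ∧
  w.Chain' (InDiffFactors G₁ G₂) ∧
  (1 < w.length → ∀ x ∈ w, x ∉ H) ∧
  (w.length = 1 → (1 : G) ∉ w)

/-- `G` is the (internal) amalgamated free product `G₁ *_H G₂`: `H = G₁ ⊓ G₂`,
the factors generate, and nonempty reduced words have nontrivial product. -/
def IsAmalgam {G : Type*} [Group G] (G₁ G₂ H : Subgroup G) : Prop :=
  H = G₁ ⊓ G₂ ∧ Subgroup.closure ((G₁ : Set G) ∪ (G₂ : Set G)) = ⊤ ∧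
  ∀ w : List G, ReducedWord' G₁ G₂ H w → w ≠ [] → w.prod ≠ 1

/-- The double coset `H a H`. -/
def DCoset {G : Type*} [Group G] (H : Subgroup G) (a : G) : Set G :=
  (H : Set G) * {a} * (H : Set G)

/-- There is an `a`-segment of length `2k-1` starting at position `j` of the word `w`:
a subword `a x₁ ⋯ x_{2k-1} a` with no `x_i = a`. -/
def IsSegAt {G : Type*} [Group G] (a : G) (w : List G) (k j : ℕ) : Prop :=
  1 ≤ k ∧ w[j]? = some a ∧ w[j + 2 * k]? = some a ∧
    ∀ i, 0 < i → i < 2 * k → w[j + i]? ≠ some a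

/-- `pk a w k` = number of `a`-segments of length `2k-1` in `w`. -/
noncomputable def pk {G : Type*} [Group G] (a : G) (w : List G) (k : ℕ) : ℕ :=
  Set.ncard {j : ℕ | IsSegAt a w k j}

/-- `mk' a w k` = number of `a⁻¹`-segments of length `2k-1` in `w`. -/
noncomputable def mk' {G : Type*} [Group G] (a : G) (w : List G) (k : ℕ) : ℕ :=
  pk a⁻¹ w k

noncomputable def dk {G : Type*} [Group G] (a : G) (w : List G) (k : ℕ) : ℤ :=
  (pk a w k : ℤ) - (mk' a w k : ℤ)

/-- `rk` is the parity of `dk`. -/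
noncomputable def rk {G : Type*} [Group G] (a : G) (w : List G) (k : ℕ) : ℕ :=
  (dk a w k).natAbs % 2

/-- The segment-counting function `f(w) = Σ_k r_k(w)` (all segments have length
at most the length of `w`, so the sum below is the full sum). -/
noncomputable def segf {G : Type*} [Group G] (a : G) (w : List G) : ℕ :=
  ∑ k ∈ Finset.Icc 1 w.length, rk a w k

/-- Data describing the passage from a reduced word `x` to a special form: each
syllable of the form `u * a^θ * v` with `u v ∈ H` (marked `rep i = true`) is replaced
by `a^θ`, with `u`, `v` absorbed into the neighbouring syllables. -/
structure SpecialData {G : Type*} [Group G] (H : Subgroup G) (a : G) (x : List G) where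
  rep : ℕ → Bool
  u : ℕ → G
  v : ℕ → G
  θ : ℕ → ℤ
  hu : ∀ i, u i ∈ H
  hv : ∀ i, v i ∈ H
  hθ : ∀ i, θ i = 1 ∨ θ i = -1
  hrep : ∀ (i : ℕ) (hi : i < x.length), rep i = true → x.get ⟨i, hi⟩ = u i * a ^ θ i * v i
  hnotrep : ∀ i, rep i = false → u i = 1 ∧ v i = 1
  hforced : ∀ (i : ℕ) (hi : i < x.length),
    (∃ u' ∈ H, ∃ v' ∈ H, ∃ θ' : ℤ, (θ' = 1 ∨ θ' = -1) ∧ x.get ⟨i, hi⟩ = u' * a ^ θ' * v') →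
    rep i = true

/-- The special form produced from the reduced word `x` by the data `d`. -/
def SpecialData.word {G : Type*} [Group G] {H : Subgroup G} {a : G} {x : List G}
    (d : SpecialData H a x) : List G :=
  (if x.length ≠ 0 ∧ d.rep 0 = true then [d.u 0] else []) ++
  (List.ofFn fun i : Fin x.length =>
    if d.rep (i : ℕ) = true then a ^ d.θ (i : ℕ)
    else (if (i : ℕ) = 0 then 1 else d.v ((i : ℕ) - 1)) * x.get i *
      (if (i : ℕ) + 1 < x.length then d.u ((i : ℕ) + 1) else 1)) ++
  (if x.length ≠ 0 ∧ d.rep (x.length - 1) = true then [d.v (x.length - 1)] else [])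

/-- `w` is a special form of `g`. -/
def IsSpecialForm {G : Type*} [Group G] (G₁ G₂ H : Subgroup G) (a g : G) (w : List G) : Prop :=
  ∃ (x : List G) (d : SpecialData H a x),
    ReducedWord' G₁ G₂ H x ∧ x.prod = g ∧ w = d.word

section Aux

variable {G : Type*} [Group G] {G₁ G₂ H : Subgroup G}

lemma mem_dcoset {z b : G} : z ∈ DCoset H b ↔ ∃ u ∈ H, ∃ v ∈ H, z = u * b * v := by
  simp only [DCoset, Set.mem_mul, Set.mem_singleton_iff, SetLike.mem_coe]
  constructor
  · rintro ⟨x, ⟨u, hu, b', rfl, rfl⟩, v, hv, rfl⟩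
    exact ⟨u, hu, v, hv, rfl⟩
  · rintro ⟨u, hu, v, hv, rfl⟩
    exact ⟨u * b, ⟨u, hu, b, rfl, rfl⟩, v, hv, rfl⟩

lemma dcoset_eq_of_mem {b c : G} (h : c ∈ DCoset H b) : DCoset H c = DCoset H b := by
  rcases mem_dcoset.1 h with ⟨u, hu, v, hv, rfl⟩
  ext z
  simp only [mem_dcoset]
  constructor
  · rintro ⟨u', hu', v', hv', rfl⟩
    exact ⟨u' * u, mul_mem hu' hu, v * v', mul_mem hv hv', by group⟩
  · rintro ⟨u', hu', v', hv', rfl⟩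
    exact ⟨u' * u⁻¹, mul_mem hu' (inv_mem hu), v⁻¹ * v', mul_mem (inv_mem hv) hv', by group⟩

lemma self_mem_dcoset (b : G) : b ∈ DCoset H b :=
  mem_dcoset.2 ⟨1, one_mem _, 1, one_mem _, by group⟩

lemma dcoset_hmul {u v z b : G} (hu : u ∈ H) (hv : v ∈ H) :
    u * z * v ∈ DCoset H b ↔ z ∈ DCoset H b := by
  simp only [mem_dcoset]
  constructor
  · rintro ⟨u', hu', v', hv', he⟩
    refine ⟨u⁻¹ * u', mul_mem (inv_mem hu) hu', v' * v⁻¹, mul_mem hv' (inv_mem hv), ?_⟩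
    have : z = u⁻¹ * (u * z * v) * v⁻¹ := by group
    rw [this, he]; group
  · rintro ⟨u', hu', v', hv', rfl⟩
    exact ⟨u * u', mul_mem hu hu', v' * v, mul_mem hv' hv, by group⟩

lemma inv_mem_dcoset {z b : G} (h : z ∈ DCoset H b) : z⁻¹ ∈ DCoset H b⁻¹ := by
  rcases mem_dcoset.1 h with ⟨u, hu, v, hv, rfl⟩
  exact mem_dcoset.2 ⟨v⁻¹, inv_mem hv, u⁻¹, inv_mem hu, by group⟩

lemma inv_mem_dcoset_iff {z b : G} : z⁻¹ ∈ DCoset H b⁻¹ ↔ z ∈ DCoset H b :=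
  ⟨fun h => by simpa using inv_mem_dcoset h, inv_mem_dcoset⟩

variable {a : G}

lemma dcoset_a_not_H (hd : DCoset H a ≠ DCoset H a⁻¹) : a ∉ H := by
  intro ha
  exact hd (dcoset_eq_of_mem
    (mem_dcoset.2 ⟨a⁻¹, inv_mem ha, a⁻¹, inv_mem ha, by group⟩)).symm

lemma dcoset_a_ne_inv (hd : DCoset H a ≠ DCoset H a⁻¹) : a ≠ a⁻¹ := fun h => hd (by rw [← h])

lemma dcoset_not_both (hd : DCoset H a ≠ DCoset H a⁻¹) (z : G) :
    ¬(z ∈ DCoset H a ∧ z ∈ DCoset H a⁻¹) := by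
  rintro ⟨h1, h2⟩
  exact hd ((dcoset_eq_of_mem h1).symm.trans (dcoset_eq_of_mem h2))

/-- Strongly reduced word: reduced with no letter in `H`. -/
def SRw (G₁ G₂ H : Subgroup G) (w : List G) : Prop :=
  (∀ x ∈ w, x ∈ (G₁ : Set G) ∪ (G₂ : Set G)) ∧
  w.Chain' (InDiffFactors G₁ G₂) ∧ ∀ x ∈ w, x ∉ H

lemma SRw.red {w : List G} (h : SRw G₁ G₂ H w) : ReducedWord' G₁ G₂ H w :=
  ⟨h.1, h.2.1, fun _ x hx => h.2.2 x hx, fun _ h1 => h.2.2 1 h1 (one_mem H)⟩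

lemma SRw.append {u v : List G} (hu : SRw G₁ G₂ H u) (hv : SRw G₁ G₂ H v)
    (hj : ∀ x ∈ u.getLast?, ∀ y ∈ v.head?, InDiffFactors G₁ G₂ x y) :
    SRw G₁ G₂ H (u ++ v) := by
  refine ⟨?_, List.isChain_append.2 ⟨hu.2.1, hv.2.1, hj⟩, ?_⟩
  · intro z hz
    rcases List.mem_append.1 hz with hz | hz
    exacts [hu.1 z hz, hv.1 z hz]
  · intro z hz
    rcases List.mem_append.1 hz with hz | hz
    exacts [hu.2.2 z hz, hv.2.2 z hz]

lemma inDiff_inv {x y : G} (h : InDiffFactors G₁ G₂ x y) : InDiffFactors G₁ G₂ y⁻¹ x⁻¹ := by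
  unfold InDiffFactors at h ⊢
  simp only [inv_mem_iff]
  tauto

lemma SRw.revinv {w : List G} (h : SRw G₁ G₂ H w) :
    SRw G₁ G₂ H ((w.map (fun z => z⁻¹)).reverse) := by
  refine ⟨?_, ?_, ?_⟩
  · intro z hz
    simp only [List.mem_reverse, List.mem_map] at hz
    rcases hz with ⟨t, ht, rfl⟩
    rcases h.1 t ht with ht1 | ht1
    · exact Or.inl (by simpa using inv_mem (SetLike.mem_coe.1 ht1))
    · exact Or.inr (by simpa using inv_mem (SetLike.mem_coe.1 ht1))
  · show List.IsChain _ _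
    rw [List.isChain_reverse, List.isChain_map]
    exact List.IsChain.imp (fun a b hab => inDiff_inv hab) h.2.1
  · intro z hz
    simp only [List.mem_reverse, List.mem_map] at hz
    rcases hz with ⟨t, ht, rfl⟩
    simpa using fun hh => h.2.2 t ht (by simpa using hh)

lemma red_tail_SR {q : G} {qs : List G} (hy : ReducedWord' G₁ G₂ H (q :: qs)) :
    SRw G₁ G₂ H qs := by
  refine ⟨fun z hz => hy.1 z (List.mem_cons_of_mem q hz), (List.isChain_cons.1 hy.2.1).2, ?_⟩
  intro z hz
  have hlen : 1 < (q :: qs).length := by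
    cases qs with
    | nil => cases hz
    | cons _ _ => simp
  exact hy.2.2.1 hlen z (List.mem_cons_of_mem q hz)

lemma revinv_prod (l : List G) : ((l.map (fun z => z⁻¹)).reverse).prod = l.prod⁻¹ :=
  (List.prod_inv_reverse l).symm

lemma prod_one_nil (ham : IsAmalgam G₁ G₂ H) {w : List G}
    (hw : ReducedWord' G₁ G₂ H w) (h : w.prod = 1) : w = [] := by
  by_contra hne
  exact ham.2.2 w hw hne h

/-- Head cancellation: words with equal products either are both empty or their heads
agree up to `H`. -/
lemma cancel_head (ham : IsAmalgam G₁ G₂ H) {x y : List G}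
    (hx : ReducedWord' G₁ G₂ H x) (hy : ReducedWord' G₁ G₂ H y) (hp : x.prod = y.prod) :
    (x = [] ∧ y = []) ∨ ∃ p ps q qs, x = p :: ps ∧ y = q :: qs ∧ q⁻¹ * p ∈ H := by
  match x, y with
  | [], [] => exact Or.inl ⟨rfl, rfl⟩
  | [], q :: qs =>
    exact absurd (by simpa using hp.symm) (ham.2.2 _ hy (by simp))
  | p :: ps, [] =>
    exact absurd (by simpa using hp) (ham.2.2 _ hx (by simp))
  | p :: ps, q :: qs =>
    refine Or.inr ⟨p, ps, q, qs, rfl, rfl, ?_⟩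
    by_contra hc
    have hHsub : ∀ z : G, z ∈ H → z ∈ G₁ ∧ z ∈ G₂ := fun z hz => by
      rw [ham.1] at hz; exact Subgroup.mem_inf.1 hz
    have hHmem : ∀ z : G, z ∈ G₁ → z ∈ G₂ → z ∈ H := fun z h1 h2 => by
      rw [ham.1]; exact Subgroup.mem_inf.2 ⟨h1, h2⟩
    have hpu : p ∈ G₁ ∨ p ∈ G₂ := by simpa using hx.1 p (by simp)
    have hqu : q ∈ G₁ ∨ q ∈ G₂ := by simpa using hy.1 q (by simp)
    have hkey : p * ps.prod = q * qs.prod := by simpa using hp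
    have hA : SRw G₁ G₂ H ((qs.map (fun z => z⁻¹)).reverse) := (red_tail_SR hy).revinv
    have hps : SRw G₁ G₂ H ps := red_tail_SR hx
    -- the junction fact coming from `y`'s chain
    have hjy : ∀ z ∈ ((qs.map (fun z => z⁻¹)).reverse).getLast?, ∃ t, t ∈ qs.head? ∧ z = t⁻¹ := by
      intro z hz
      rw [List.getLast?_reverse, List.head?_map] at hz
      cases qs with
      | nil => simp at hz
      | cons q₂ qt =>
        simp only [List.head?_cons, Option.map_some, Option.mem_some_iff] at hz
        exact ⟨q₂, by simp [hz]⟩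
    by_cases hsf : (q⁻¹ ∈ G₁ ∧ p ∈ G₁) ∨ (q⁻¹ ∈ G₂ ∧ p ∈ G₂)
    · -- the merged letter `c = q⁻¹ * p` lies in a common factor and is not in `H`
      set c := q⁻¹ * p with hcdef
      have hcu : c ∈ (G₁ : Set G) ∪ (G₂ : Set G) := by
        rcases hsf with ⟨h1, h2⟩ | ⟨h1, h2⟩
        · exact Or.inl (by simpa using mul_mem h1 h2)
        · exact Or.inr (by simpa using mul_mem h1 h2)
      have hcps : SRw G₁ G₂ H (c :: ps) := by
        refine ⟨?_, ?_, ?_⟩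
        · intro z hz
          rcases List.mem_cons.1 hz with rfl | hz
          exacts [hcu, hps.1 z hz]
        · show List.IsChain _ _
          rw [List.isChain_cons]
          refine ⟨?_, hps.2.1⟩
          intro z hz
          have hpz : InDiffFactors G₁ G₂ p z := (List.isChain_cons.1 hx.2.1).1 z hz
          unfold InDiffFactors at hpz ⊢
          rcases hsf with ⟨h1, h2⟩ | ⟨h1, h2⟩ <;> refine ⟨fun hh => ?_, fun hh => ?_⟩
          · exact hpz.1 ⟨h2, hh.2⟩
          · exact hc (hHmem _ (mul_mem h1 h2) hh.1)
          · exact hc (hHmem _ hh.1 (mul_mem h1 h2))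
          · exact hpz.2 ⟨h2, hh.2⟩
        · intro z hz
          rcases List.mem_cons.1 hz with rfl | hz
          exacts [hc, hps.2.2 z hz]
      have hW : SRw G₁ G₂ H ((qs.map (fun z => z⁻¹)).reverse ++ (c :: ps)) := by
        refine SRw.append hA hcps ?_
        intro z hz y' hy'
        simp only [List.head?_cons, Option.mem_some_iff] at hy'
        subst hy'
        rcases hjy z hz with ⟨t, ht, rfl⟩
        cases qs with
        | nil => simp at ht
        | cons q₂ qt =>
          simp only [List.head?_cons, Option.mem_some_iff] at ht
          subst ht
          have hqq2 : InDiffFactors G₁ G₂ q q₂ := (List.isChain_cons.1 hy.2.1).1 q₂ (by simp)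
          unfold InDiffFactors at hqq2 ⊢
          simp only [inv_mem_iff]
          rcases hsf with ⟨h1, h2⟩ | ⟨h1, h2⟩ <;> refine ⟨fun hh => ?_, fun hh => ?_⟩
          · exact hqq2.1 ⟨inv_mem_iff.1 h1, hh.1⟩
          · exact hc (hHmem _ (mul_mem h1 h2) hh.2)
          · exact hc (hHmem _ hh.2 (mul_mem h1 h2))
          · exact hqq2.2 ⟨inv_mem_iff.1 h1, hh.1⟩
      refine ham.2.2 _ hW.red (by simp) ?_
      rw [List.prod_append, List.prod_cons, revinv_prod, hcdef, mul_assoc q⁻¹ p, hkey]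
      group
    · -- the heads lie in genuinely different factors
      push_neg at hsf
      have hpH : p ∉ H := by
        intro hh
        rcases hqu with h | h
        · exact hsf.1 (inv_mem h) (hHsub p hh).1
        · exact hsf.2 (inv_mem h) (hHsub p hh).2
      have hqH : q ∉ H := by
        intro hh
        rcases hpu with h | h
        · exact hsf.1 (inv_mem (hHsub q hh).1) h
        · exact hsf.2 (inv_mem (hHsub q hh).2) h
      have htail : SRw G₁ G₂ H (p :: ps) := by
        refine ⟨hx.1, hx.2.1, ?_⟩
        intro z hz
        rcases List.mem_cons.1 hz with rfl | hz
        exacts [hpH, hps.2.2 z hz]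
      have hqpp : SRw G₁ G₂ H (q⁻¹ :: p :: ps) := by
        refine ⟨?_, ?_, ?_⟩
        · intro z hz
          rcases List.mem_cons.1 hz with rfl | hz
          · rcases hqu with h | h
            · exact Or.inl (by simpa using inv_mem h)
            · exact Or.inr (by simpa using inv_mem h)
          · exact htail.1 z hz
        · show List.IsChain _ _
          rw [List.isChain_cons]
          refine ⟨?_, htail.2.1⟩
          intro z hz
          simp only [List.head?_cons, Option.mem_some_iff] at hz
          subst hz
          exact ⟨fun hh => hsf.1 hh.1 hh.2, fun hh => hsf.2 hh.1 hh.2⟩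
        · intro z hz
          rcases List.mem_cons.1 hz with rfl | hz
          · simpa using hqH
          · exact htail.2.2 z hz
      have hW : SRw G₁ G₂ H ((qs.map (fun z => z⁻¹)).reverse ++ (q⁻¹ :: p :: ps)) := by
        refine SRw.append hA hqpp ?_
        intro z hz y' hy'
        simp only [List.head?_cons, Option.mem_some_iff] at hy'
        subst hy'
        rcases hjy z hz with ⟨t, ht, rfl⟩
        cases qs with
        | nil => simp at ht
        | cons q₂ qt =>
          simp only [List.head?_cons, Option.mem_some_iff] at ht
          subst ht
          exact inDiff_inv ((List.isChain_cons.1 hy.2.1).1 q₂ (by simp))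
      refine ham.2.2 _ hW.red (by simp) ?_
      rw [List.prod_append, List.prod_cons, List.prod_cons, revinv_prod, hkey]
      group

lemma red_tail {q : G} {qs : List G} (hy : ReducedWord' G₁ G₂ H (q :: qs)) :
    ReducedWord' G₁ G₂ H qs := by
  refine ⟨(red_tail_SR hy).1, (red_tail_SR hy).2.1, fun _ z hz => (red_tail_SR hy).2.2 z hz, ?_⟩
  intro hlen h1
  exact (red_tail_SR hy).2.2 1 h1 (one_mem H)

lemma red_singleton {h : G} (hH : h ∈ H) (hG : H = G₁ ⊓ G₂) (hne : h ≠ 1) :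
    ReducedWord' G₁ G₂ H [h] := by
  refine ⟨?_, List.isChain_singleton _, by simp, by simpa using hne.symm⟩
  intro z hz
  simp only [List.mem_singleton] at hz
  subst hz
  rw [hG] at hH
  exact Or.inl (by simpa using (Subgroup.mem_inf.1 hH).1)

/-- Uniqueness of reduced form up to interleaving `H`-elements. -/
lemma unique_aux (ham : IsAmalgam G₁ G₂ H) :
    ∀ (n : ℕ) (x y : List G), x.length ≤ n →
    ReducedWord' G₁ G₂ H x → ReducedWord' G₁ G₂ H y → x.prod = y.prod →
    x.length = y.length ∧ ∀ i : ℕ, ∃ u ∈ H, ∃ v ∈ H, y.getD i 1 = u * x.getD i 1 * v := by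
  intro n
  induction n with
  | zero =>
    intro x y hlen hx hy hp
    have hx0 : x = [] := List.length_eq_zero_iff.1 (Nat.le_zero.1 hlen)
    subst hx0
    have hy0 : y = [] := prod_one_nil ham hy (by simpa using hp.symm)
    subst hy0
    exact ⟨rfl, fun i => ⟨1, one_mem _, 1, one_mem _, by simp⟩⟩
  | succ n IH =>
    intro x y hlen hx hy hp
    rcases cancel_head ham hx hy hp with ⟨rfl, rfl⟩ | ⟨p, ps, q, qs, rfl, rfl, hqp⟩
    · exact ⟨rfl, fun i => ⟨1, one_mem _, 1, one_mem _, by simp⟩⟩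
    · have hkey : p * ps.prod = q * qs.prod := by simpa using hp
      have hpq : p = q * (q⁻¹ * p) := by group
      -- helper: a strongly reduced word whose product lies in `H` leads to emptiness
      have hcontr : ∀ (l : List G), ReducedWord' G₁ G₂ H l →
          (1 < l.length → ∀ z ∈ l, z ∉ H) → l.prod ∈ H →
          (∀ z ∈ l.head?, z ∉ H) → l = [] := by
        intro l hl hlH hprod hhead
        cases l with
        | nil => rfl
        | cons z zs =>
          exfalso
          rcases eq_or_ne (z :: zs).prod 1 with h1 | h1
          · exact absurd (prod_one_nil ham hl h1) (by simp)
          · have hsing : ReducedWord' G₁ G₂ H [(z :: zs).prod] :=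
              red_singleton hprod ham.1 h1
            rcases cancel_head ham hl hsing (by simp) with ⟨h2, _⟩ | ⟨p', ps', q', qs', he1, he2, hm⟩
            · simp at h2
            · have hq' : q' = (z :: zs).prod := by
                have := he2
                simp only [List.cons.injEq] at this
                exact this.1.symm
              have hp' : p' = z := by
                have := he1
                simp only [List.cons.injEq] at this
                exact this.1.symm
              rw [hq', hp'] at hm
              have hzH : z ∈ H := by
                have := mul_mem hprod hm
                simpa using this
              exact hhead z rfl hzH
      cases ps with
      | nil =>
        -- `x = [p]`; show `qs = []`
        have hqs : qs = [] := by
          apply hcontr qs (red_tail hy) (fun _ z hz => (red_tail_SR hy).2.2 z hz)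
          · have h2 : p = q * qs.prod := by simpa using hkey
            have hq1 : qs.prod = q⁻¹ * p := by rw [h2]; group
            rw [hq1]; exact hqp
          · intro z hz
            cases qs with
            | nil => simp at hz
            | cons q₂ qt =>
              simp only [List.head?_cons, Option.mem_some_iff] at hz
              subst hz
              exact (red_tail_SR hy).2.2 q₂ (by simp)
        subst hqs
        refine ⟨rfl, fun i => ?_⟩
        match i with
        | 0 => exact ⟨1, one_mem _, (q⁻¹ * p)⁻¹, inv_mem hqp, by simp⟩
        | (i + 1) => exact ⟨1, one_mem _, 1, one_mem _, by simp⟩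
      | cons p₂ pt =>
        cases qs with
        | nil =>
          -- symmetric: impossible
          exfalso
          have : (p₂ :: pt) = [] := by
            apply hcontr (p₂ :: pt) (red_tail hx) (fun _ z hz => (red_tail_SR hx).2.2 z hz)
            · have h2 : p * (p₂ :: pt).prod = q := by simpa using hkey
              have hq1 : (p₂ :: pt).prod = p⁻¹ * q := by rw [← h2]; group
              rw [hq1]
              have h3 : p⁻¹ * q = (q⁻¹ * p)⁻¹ := by group
              rw [h3]; exact inv_mem hqp
            · intro z hz
              simp only [List.head?_cons, Option.mem_some_iff] at hz
              subst hz
              exact (red_tail_SR hx).2.2 p₂ (by simp)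
          simp at this
        | cons q₂ qt =>
          -- recursive step
          set h := q⁻¹ * p with hdef
          have hx' : ReducedWord' G₁ G₂ H ((h * p₂) :: pt) := by
            have hHsub : ∀ z : G, z ∈ H → z ∈ G₁ ∧ z ∈ G₂ := fun z hz => by
              rw [ham.1] at hz; exact Subgroup.mem_inf.1 hz
            have hp2H : p₂ ∉ H := hx.2.2.1 (by simp) p₂ (by simp)
            have hfac : ∀ K : Subgroup G, h ∈ K → (h * p₂ ∈ K ↔ p₂ ∈ K) :=
              fun K hK => ⟨fun hh => by simpa using mul_mem (inv_mem hK) hh, fun hh => mul_mem hK hh⟩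
            have h1 := (hHsub h hqp).1
            have h2 := (hHsub h hqp).2
            refine ⟨?_, ?_, ?_, ?_⟩
            · intro z hz
              rcases List.mem_cons.1 hz with rfl | hz
              · rcases (by simpa using hx.1 p₂ (by simp) : p₂ ∈ G₁ ∨ p₂ ∈ G₂) with hh | hh
                · exact Or.inl (by simpa using mul_mem h1 hh)
                · exact Or.inr (by simpa using mul_mem h2 hh)
              · exact hx.1 z (by simp [hz])
            · show List.IsChain _ _
              rw [List.isChain_cons]
              refine ⟨?_, (List.isChain_cons.1 (red_tail hx).2.1).2⟩
              intro z hz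
              have hpz : InDiffFactors G₁ G₂ p₂ z := (List.isChain_cons.1 (red_tail hx).2.1).1 z hz
              unfold InDiffFactors at hpz ⊢
              rw [hfac G₁ h1, hfac G₂ h2]
              exact hpz
            · intro _ z hz
              rcases List.mem_cons.1 hz with rfl | hz
              · rw [hfac H hqp]; exact hp2H
              · exact (red_tail_SR hx).2.2 z (by simp [hz])
            · intro hl h1'
              simp only [List.length_cons] at hl
              have hpt : pt = [] := by
                cases pt with
                | nil => rfl
                | cons _ _ => simp at hl
              subst hpt
              simp only [List.mem_singleton] at h1'
              apply hp2H
              have hp2inv : p₂ = h⁻¹ := eq_inv_of_mul_eq_one_right h1'.symm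
              rw [hp2inv]; exact inv_mem hqp
          have hq' : ReducedWord' G₁ G₂ H (q₂ :: qt) := red_tail hy
          have hprod : ((h * p₂) :: pt).prod = (q₂ :: qt).prod := by
            have h2 : p * (p₂ * pt.prod) = q * (q₂ * qt.prod) := by simpa using hkey
            simp only [List.prod_cons]
            rw [hdef]
            rw [show q⁻¹ * p * p₂ * pt.prod = q⁻¹ * (p * (p₂ * pt.prod)) by group, h2]
            group
          have hlen' : ((h * p₂) :: pt).length ≤ n := by
            simp only [List.length_cons] at hlen ⊢
            omega
          obtain ⟨hl, hcos⟩ := IH _ _ hlen' hx' hq' hprod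
          refine ⟨by simpa using hl, fun i => ?_⟩
          match i with
          | 0 =>
            refine ⟨1, one_mem _, h⁻¹, inv_mem hqp, ?_⟩
            simp only [List.getD_cons_zero, one_mul, hdef]
            group
          | (i + 1) =>
            rcases hcos i with ⟨u, hu, v, hv, he⟩
            match i with
            | 0 =>
              refine ⟨u * h, mul_mem hu hqp, v, hv, ?_⟩
              simp only [List.getD_cons_zero, List.getD_cons_succ] at he ⊢
              rw [he]; group
            | (i + 1) =>
              refine ⟨u, hu, v, hv, ?_⟩
              simpa using he

end Aux

section Seg

/-- Abstract segment positions of a set of indices. -/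
def SegSet (S : Set ℕ) (k : ℕ) : Set ℕ :=
  {j | 1 ≤ k ∧ j ∈ S ∧ j + 2 * k ∈ S ∧ ∀ i, 0 < i → i < 2 * k → j + i ∉ S}

lemma pk_eq_segset {G : Type*} [Group G] (b : G) (w : List G) (A : Set ℕ)
    (hchar : ∀ j, w[j]? = some b ↔ j ∈ A) (k : ℕ) : pk b w k = (SegSet A k).ncard := by
  unfold pk
  congr 1
  ext j
  simp only [Set.mem_setOf_eq, IsSegAt, SegSet]
  constructor
  · rintro ⟨hk, h1, h2, h3⟩
    exact ⟨hk, (hchar _).1 h1, (hchar _).1 h2, fun i hi1 hi2 hA => h3 i hi1 hi2 ((hchar _).2 hA)⟩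
  · rintro ⟨hk, h1, h2, h3⟩
    exact ⟨hk, (hchar _).2 h1, (hchar _).2 h2, fun i hi1 hi2 hw => h3 i hi1 hi2 ((hchar _).1 hw)⟩

lemma segSet_shift (S : Set ℕ) (s k : ℕ) :
    SegSet ((fun i => i + s) '' S) k = (fun i => i + s) '' SegSet S k := by
  ext j
  simp only [SegSet, Set.mem_image, Set.mem_setOf_eq]
  constructor
  · rintro ⟨hk, ⟨i, hiS, rfl⟩, h2, hmid⟩
    refine ⟨i, ⟨hk, hiS, ?_, ?_⟩, rfl⟩
    · rcases h2 with ⟨i', hi'S, he⟩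
      have hii : i' = i + 2 * k := by omega
      rwa [hii] at hi'S
    · intro t ht1 ht2 htS
      exact hmid t ht1 ht2 ⟨i + t, htS, by omega⟩
  · rintro ⟨i, ⟨hk, hiS, h2, hmid⟩, rfl⟩
    refine ⟨hk, ⟨i, hiS, rfl⟩, ⟨i + 2 * k, h2, by omega⟩, ?_⟩
    rintro t ht1 ht2 ⟨i', hi'S, he⟩
    have hii : i' = i + t := by omega
    rw [hii] at hi'S
    exact hmid t ht1 ht2 hi'S

lemma segSet_shift_ncard (S : Set ℕ) (s k : ℕ) :
    (SegSet ((fun i => i + s) '' S) k).ncard = (SegSet S k).ncard := by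
  rw [segSet_shift]
  exact Set.ncard_image_of_injective _ (add_left_injective s)

lemma segSet_rev (n k : ℕ) (S : Set ℕ) (hS : ∀ i ∈ S, i < n) :
    SegSet {i | i < n ∧ n - 1 - i ∈ S} k = (fun j => n - 1 - (j + 2 * k)) '' SegSet S k := by
  ext j
  simp only [SegSet, Set.mem_image, Set.mem_setOf_eq]
  constructor
  · rintro ⟨hk, ⟨hjn, hjS⟩, ⟨h2n, h2S⟩, hmid⟩
    refine ⟨n - 1 - (j + 2 * k), ⟨hk, h2S, ?_, ?_⟩, ?_⟩
    · have he : n - 1 - (j + 2 * k) + 2 * k = n - 1 - j := by omega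
      rw [he]; exact hjS
    · intro t ht1 ht2 htS
      have he : n - 1 - (j + (2 * k - t)) = n - 1 - (j + 2 * k) + t := by omega
      exact hmid (2 * k - t) (by omega) (by omega) ⟨by omega, by rw [he]; exact htS⟩
    · omega
  · rintro ⟨i, ⟨hk, hiS, h2S, hmid⟩, rfl⟩
    have hi1 : i < n := hS i hiS
    have hi2 : i + 2 * k < n := hS _ h2S
    refine ⟨hk, ⟨by omega, ?_⟩, ⟨by omega, ?_⟩, ?_⟩
    · have he : n - 1 - (n - 1 - (i + 2 * k)) = i + 2 * k := by omega
      rw [he]; exact h2S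
    · have he : n - 1 - (n - 1 - (i + 2 * k) + 2 * k) = i := by omega
      rw [he]; exact hiS
    · rintro t ht1 ht2 ⟨hlt, htS⟩
      have he : n - 1 - (n - 1 - (i + 2 * k) + t) = i + (2 * k - t) := by omega
      rw [he] at htS
      exact hmid (2 * k - t) (by omega) (by omega) htS

lemma segSet_rev_ncard (n k : ℕ) (S : Set ℕ) (hS : ∀ i ∈ S, i < n) :
    (SegSet {i | i < n ∧ n - 1 - i ∈ S} k).ncard = (SegSet S k).ncard := by
  rw [segSet_rev n k S hS]
  apply Set.ncard_image_of_injOn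
  intro j1 h1 j2 h2 he
  have hb1 : j1 + 2 * k < n := hS _ h1.2.2.1
  have hb2 : j2 + 2 * k < n := hS _ h2.2.2.1
  simp only at he
  omega

lemma pk_zero_of_lt {G : Type*} [Group G] (b : G) (w : List G) (k : ℕ) (h : w.length < k) :
    pk b w k = 0 := by
  unfold pk
  convert Set.ncard_empty ℕ
  ext j
  simp only [Set.mem_setOf_eq, Set.mem_empty_iff_false, iff_false]
  rintro ⟨hk, _, h2, _⟩
  have hnone : w[j + 2 * k]? = none := List.getElem?_eq_none (by omega)
  rw [hnone] at h2
  cases h2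

lemma rk_zero_of_lt {G : Type*} [Group G] (b : G) (w : List G) (k : ℕ) (h : w.length < k) :
    rk b w k = 0 := by
  unfold rk dk mk'
  rw [pk_zero_of_lt _ _ _ h, pk_zero_of_lt _ _ _ h]
  simp

end Seg

section Word

variable {G : Type*} [Group G] {G₁ G₂ H : Subgroup G} {a : G} {x : List G}

lemma append3_get {α : Type*} (F M B : List α) (i : ℕ) (hi : i < M.length) :
    ((F ++ M) ++ B)[F.length + i]? = M[i]? := by
  have h1 : F.length + i < (F ++ M).length := by simp; omega
  rw [List.getElem?_append, if_pos h1, List.getElem?_append, if_neg (by omega)]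
  congr 1
  omega

lemma word_length (d : SpecialData H a x) :
    d.word.length = (if x.length ≠ 0 ∧ d.rep 0 = true then 1 else 0) + x.length
      + (if x.length ≠ 0 ∧ d.rep (x.length - 1) = true then 1 else 0) := by
  unfold SpecialData.word
  simp only [List.length_append, List.length_ofFn, apply_ite List.length,
    List.length_singleton, List.length_nil]

lemma word_get_mid (d : SpecialData H a x) (i : ℕ) (hi : i < x.length) :
    d.word[i + (if x.length ≠ 0 ∧ d.rep 0 = true then 1 else 0)]? =
      some (if d.rep i = true then a ^ d.θ i
        else (if i = 0 then (1:G) else d.v (i - 1)) * x.get ⟨i, hi⟩ *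
          (if i + 1 < x.length then d.u (i + 1) else 1)) := by
  unfold SpecialData.word
  have hlen : i < (List.ofFn fun j : Fin x.length =>
      if d.rep (j : ℕ) = true then a ^ d.θ (j : ℕ)
      else (if (j : ℕ) = 0 then 1 else d.v ((j : ℕ) - 1)) * x.get j *
        (if (j : ℕ) + 1 < x.length then d.u ((j : ℕ) + 1) else 1)).length := by
    simpa using hi
  have hidx : (i + if x.length ≠ 0 ∧ d.rep 0 = true then 1 else 0) =
      (if x.length ≠ 0 ∧ d.rep 0 = true then [d.u 0] else []).length + i := by
    by_cases h0 : x.length ≠ 0 ∧ d.rep 0 = true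
    · rw [if_pos h0, if_pos h0]; simp [Nat.add_comm]
    · rw [if_neg h0, if_neg h0]; simp
  rw [hidx, append3_get _ _ _ i hlen, List.getElem?_eq_getElem hlen, List.getElem_ofFn]

lemma word_get_range (d : SpecialData H a x) {j : ℕ} {c : G} (hc : ∀ h : G, h ∈ H → c ≠ h)
    (hj : d.word[j]? = some c) :
    (if x.length ≠ 0 ∧ d.rep 0 = true then 1 else 0) ≤ j ∧
      j < (if x.length ≠ 0 ∧ d.rep 0 = true then 1 else 0) + x.length := by
  have hn0 : x.length = 0 → False := by
    intro h0
    have : d.word = [] := by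
      unfold SpecialData.word
      simp [h0]
    rw [this] at hj
    simp at hj
  constructor
  · by_contra hlt
    push_neg at hlt
    -- then the front block is nonempty and j = 0
    by_cases h0 : x.length ≠ 0 ∧ d.rep 0 = true
    · rw [if_pos h0] at hlt
      have hj0 : j = 0 := by omega
      subst hj0
      have : d.word[0]? = some (d.u 0) := by
        unfold SpecialData.word
        rw [if_pos h0]
        simp
      rw [this] at hj
      exact hc (d.u 0) (d.hu 0) (by simpa using hj.symm)
    · rw [if_neg h0] at hlt
      omega
  · by_contra hge
    push_neg at hge
    set s : ℕ := if x.length ≠ 0 ∧ d.rep 0 = true then 1 else 0 with hs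
    have hF : (if (x.length ≠ 0 ∧ d.rep 0 = true) then [d.u 0] else []).length = s := by
      rw [hs]
      by_cases h0 : x.length ≠ 0 ∧ d.rep 0 = true
      · rw [if_pos h0, if_pos h0]; simp
      · rw [if_neg h0, if_neg h0]; simp
    have hFM : ((if (x.length ≠ 0 ∧ d.rep 0 = true) then [d.u 0] else []) ++
        (List.ofFn fun j : Fin x.length =>
          if d.rep (j : ℕ) = true then a ^ d.θ (j : ℕ)
          else (if (j : ℕ) = 0 then 1 else d.v ((j : ℕ) - 1)) * x.get j *
            (if (j : ℕ) + 1 < x.length then d.u ((j : ℕ) + 1) else 1))).length = s + x.length := by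
      rw [List.length_append, hF, List.length_ofFn]
    have : d.word[j]? = (if x.length ≠ 0 ∧ d.rep (x.length - 1) = true
        then [d.v (x.length - 1)] else [])[j - (s + x.length)]? := by
      unfold SpecialData.word
      rw [List.getElem?_append, if_neg (by rw [hFM]; omega), hFM]
    rw [this] at hj
    by_cases h1 : x.length ≠ 0 ∧ d.rep (x.length - 1) = true
    · rw [if_pos h1] at hj
      rcases Nat.lt_or_ge (j - (s + x.length)) 1 with hh | hh
      · have h00 : j - (s + x.length) = 0 := by omega
        rw [h00] at hj
        simp only [List.getElem?_cons_zero, Option.some.injEq] at hj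
        exact hc (d.v (x.length - 1)) (d.hv _) hj.symm
      · rw [List.getElem?_eq_none (by simpa using hh)] at hj
        cases hj
    · rw [if_neg h1] at hj
      simp at hj

lemma zpow_eq_of_pm {e θ : ℤ} (ha : a ≠ a⁻¹) (he : e = 1 ∨ e = -1) (hθ : θ = 1 ∨ θ = -1)
    (h : a ^ θ = a ^ e) : θ = e := by
  rcases he with rfl | rfl <;> rcases hθ with rfl | rfl <;>
    simp only [zpow_one, zpow_neg_one] at h ⊢ <;> first | rfl | exact absurd h.symm ha | exact absurd h ha

lemma dcoset_zpow_ne (hd : DCoset H a ≠ DCoset H a⁻¹) {e θ : ℤ}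
    (he : e = 1 ∨ e = -1) (hθ : θ = 1 ∨ θ = -1) (hne : θ ≠ e) :
    DCoset H (a ^ e) ≠ DCoset H (a ^ θ) := by
  rcases he with rfl | rfl <;> rcases hθ with rfl | rfl <;>
    simp only [zpow_one, zpow_neg_one] <;>
    first | (exact absurd rfl hne) | exact hd | exact hd.symm

lemma dc_forced (hd : DCoset H a ≠ DCoset H a⁻¹) (d : SpecialData H a x)
    {e : ℤ} (he : e = 1 ∨ e = -1) {i : ℕ} (hi : i < x.length)
    (hmem : x.get ⟨i, hi⟩ ∈ DCoset H (a ^ e)) : d.rep i = true ∧ d.θ i = e := by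
  rcases mem_dcoset.1 hmem with ⟨u, hu, v, hv, hxe⟩
  have hrep : d.rep i = true := d.hforced i hi ⟨u, hu, v, hv, e, he, hxe⟩
  refine ⟨hrep, ?_⟩
  by_contra hne
  have hxθ := d.hrep i hi hrep
  -- a ^ e ∈ DCoset H (a ^ θ i)
  have hae : a ^ e ∈ DCoset H (a ^ d.θ i) := by
    have h1 : a ^ e = u⁻¹ * (u * a ^ e * v) * v⁻¹ := by group
    rw [← hxe, hxθ] at h1
    have h2 : u⁻¹ * (d.u i * a ^ d.θ i * d.v i) * v⁻¹ =
        (u⁻¹ * d.u i) * a ^ d.θ i * (d.v i * v⁻¹) := by group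
    rw [h2] at h1
    rw [h1]
    exact mem_dcoset.2 ⟨_, mul_mem (inv_mem hu) (d.hu i), _, mul_mem (d.hv i) (inv_mem hv), rfl⟩
  exact dcoset_zpow_ne hd he (d.hθ i) hne (dcoset_eq_of_mem hae)

lemma word_letter (hd : DCoset H a ≠ DCoset H a⁻¹) (d : SpecialData H a x)
    (e : ℤ) (he : e = 1 ∨ e = -1) (j : ℕ) :
    d.word[j]? = some (a ^ e) ↔
      ∃ i, i < x.length ∧ j = i + (if x.length ≠ 0 ∧ d.rep 0 = true then 1 else 0) ∧
        x.getD i 1 ∈ DCoset H (a ^ e) := by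
  have haH : a ∉ H := dcoset_a_not_H hd
  have hane : a ≠ a⁻¹ := dcoset_a_ne_inv hd
  have haeH : ∀ h : G, h ∈ H → a ^ e ≠ h := by
    intro h hh hcontra
    rcases he with rfl | rfl
    · rw [zpow_one] at hcontra; exact haH (hcontra ▸ hh)
    · rw [zpow_neg_one] at hcontra
      have hainv : a⁻¹ ∈ H := by rw [hcontra]; exact hh
      exact haH (by simpa using inv_mem hainv)
  constructor
  · intro hj
    obtain ⟨hjge, hjlt⟩ := word_get_range d haeH hj
    set s : ℕ := if x.length ≠ 0 ∧ d.rep 0 = true then 1 else 0 with hs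
    refine ⟨j - s, by omega, by omega, ?_⟩
    have hi : j - s < x.length := by omega
    have hmid := word_get_mid d (j - s) hi
    rw [show j - s + s = j by omega] at hmid
    rw [hmid] at hj
    have hval := Option.some_injective _ hj
    rw [List.getD_eq_getElem x 1 hi]
    by_cases hrep : d.rep (j - s) = true
    · rw [if_pos hrep] at hval
      have hθ : d.θ (j - s) = e := zpow_eq_of_pm hane he (d.hθ _) hval
      have := d.hrep (j - s) hi hrep
      rw [hθ] at this
      have hx : x[j-s] = x.get ⟨j - s, hi⟩ := rfl
      rw [hx, this]
      exact mem_dcoset.2 ⟨_, d.hu _, _, d.hv _, rfl⟩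
    · exfalso
      rw [if_neg hrep] at hval
      set pre : G := if j - s = 0 then 1 else d.v (j - s - 1) with hpre
      set post : G := if j - s + 1 < x.length then d.u (j - s + 1) else 1 with hpost
      have hpreH : pre ∈ H := by
        rw [hpre]; split <;> first | exact one_mem _ | exact d.hv _
      have hpostH : post ∈ H := by
        rw [hpost]; split <;> first | exact one_mem _ | exact d.hu _
      have hxi : x.get ⟨j - s, hi⟩ = pre⁻¹ * a ^ e * post⁻¹ := by
        rw [← hval]; group
      exact hrep (d.hforced (j - s) hi ⟨pre⁻¹, inv_mem hpreH, post⁻¹, inv_mem hpostH, e, he, hxi⟩)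
  · rintro ⟨i, hi, rfl, hmem⟩
    rw [List.getD_eq_getElem x 1 hi] at hmem
    have hmem' : x.get ⟨i, hi⟩ ∈ DCoset H (a ^ e) := hmem
    obtain ⟨hrep, hθ⟩ := dc_forced hd d he hi hmem'
    rw [word_get_mid d i hi, if_pos hrep, hθ]

end Word

section Assemble

variable {G : Type*} [Group G] {G₁ G₂ H : Subgroup G}

lemma red_revinv {w : List G} (hw : ReducedWord' G₁ G₂ H w) :
    ReducedWord' G₁ G₂ H ((w.map (fun z => z⁻¹)).reverse) := by
  refine ⟨?_, ?_, ?_, ?_⟩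
  · intro z hz
    simp only [List.mem_reverse, List.mem_map] at hz
    rcases hz with ⟨t, ht, rfl⟩
    rcases hw.1 t ht with ht1 | ht1
    · exact Or.inl (by simpa using inv_mem (SetLike.mem_coe.1 ht1))
    · exact Or.inr (by simpa using inv_mem (SetLike.mem_coe.1 ht1))
  · show List.IsChain _ _
    rw [List.isChain_reverse, List.isChain_map]
    exact List.IsChain.imp (fun a b hab => inDiff_inv hab) hw.2.1
  · intro hlen z hz
    simp only [List.mem_reverse, List.mem_map] at hz
    rcases hz with ⟨t, ht, rfl⟩
    have h1 : 1 < w.length := by simpa using hlen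
    intro hzH
    exact hw.2.2.1 h1 t ht (by simpa using inv_mem hzH)
  · intro hlen h1
    simp only [List.mem_reverse, List.mem_map] at h1
    rcases h1 with ⟨t, ht, ht1⟩
    have ht1' : t = 1 := inv_eq_one.mp ht1
    exact hw.2.2.2 (by simpa using hlen) (ht1' ▸ ht)

lemma revinv_getD (l : List G) (i : ℕ) (h : i < l.length) :
    ((l.map (fun z => z⁻¹)).reverse).getD i 1 = (l.getD (l.length - 1 - i) 1)⁻¹ := by
  have h1 : i < ((l.map (fun z => z⁻¹)).reverse).length := by simpa using h
  have h2 : l.length - 1 - i < l.length := by omega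
  rw [List.getD_eq_getElem _ _ h1, List.getD_eq_getElem _ _ h2]
  rw [List.getElem_reverse]
  simp [List.getElem_map]

theorem segf_inv' {G : Type*} [Group G] (G₁ G₂ H : Subgroup G) (a : G)
    (ham : IsAmalgam G₁ G₂ H) (ha : a ∈ (G₁ : Set G) ∪ (G₂ : Set G))
    (hd : DCoset H a ≠ DCoset H a⁻¹)
    (g : G) (w w' : List G)
    (hw : IsSpecialForm G₁ G₂ H a g w) (hw' : IsSpecialForm G₁ G₂ H a g⁻¹ w') :
    (∀ k : ℕ, dk a w' k = - dk a w k) ∧ segf a w' = segf a w := by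
  obtain ⟨x, dx, hxr, hxp, rfl⟩ := hw
  obtain ⟨y, dy, hyr, hyp, rfl⟩ := hw'
  set n := x.length with hn
  set z : List G := (x.map (fun t => t⁻¹)).reverse with hzdef
  have hzr : ReducedWord' G₁ G₂ H z := red_revinv hxr
  have hzp : z.prod = g⁻¹ := by rw [hzdef, revinv_prod, hxp]
  obtain ⟨hlen, hcos⟩ := unique_aux ham z.length z y le_rfl hzr hyr (hzp.trans hyp.symm)
  have hzlen : z.length = n := by simp [hzdef, hn]
  have hylen : y.length = n := by rw [← hlen, hzlen]
  have hcosDC : ∀ (i : ℕ) (b : G), y.getD i 1 ∈ DCoset H b ↔ z.getD i 1 ∈ DCoset H b := by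
    intro i b
    rcases hcos i with ⟨u, hu, v, hv, he⟩
    rw [he]
    exact dcoset_hmul hu hv
  have hinv : ∀ (t b : G), t⁻¹ ∈ DCoset H b ↔ t ∈ DCoset H b⁻¹ := by
    intro t b
    rw [← inv_mem_dcoset_iff (b := b⁻¹), inv_inv]
  have hzget : ∀ i, i < n → z.getD i 1 = (x.getD (n - 1 - i) 1)⁻¹ := by
    intro i hi
    rw [hzdef]
    exact revinv_getD x i (by omega)
  -- position sets
  set Spx : Set ℕ := {i | i < n ∧ x.getD i 1 ∈ DCoset H a} with hSpx
  set Smx : Set ℕ := {i | i < n ∧ x.getD i 1 ∈ DCoset H a⁻¹} with hSmx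
  set Spy : Set ℕ := {i | i < n ∧ y.getD i 1 ∈ DCoset H a} with hSpy
  set Smy : Set ℕ := {i | i < n ∧ y.getD i 1 ∈ DCoset H a⁻¹} with hSmy
  have hSpxb : ∀ i ∈ Spx, i < n := fun i hi => hi.1
  have hSmxb : ∀ i ∈ Smx, i < n := fun i hi => hi.1
  have hSpyrev : Spy = {i | i < n ∧ n - 1 - i ∈ Smx} := by
    ext i
    simp only [hSpy, hSmx, Set.mem_setOf_eq]
    constructor
    · rintro ⟨hi, hmem⟩
      rw [hcosDC i a, hzget i hi, hinv] at hmem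
      exact ⟨hi, by omega, hmem⟩
    · rintro ⟨hi, _, hmem⟩
      refine ⟨hi, ?_⟩
      rw [hcosDC i a, hzget i hi, hinv]
      exact hmem
  have hSmyrev : Smy = {i | i < n ∧ n - 1 - i ∈ Spx} := by
    ext i
    simp only [hSmy, hSpx, Set.mem_setOf_eq]
    constructor
    · rintro ⟨hi, hmem⟩
      rw [hcosDC i a⁻¹, hzget i hi, hinv, inv_inv] at hmem
      exact ⟨hi, by omega, hmem⟩
    · rintro ⟨hi, _, hmem⟩
      refine ⟨hi, ?_⟩
      rw [hcosDC i a⁻¹, hzget i hi, hinv, inv_inv]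
      exact hmem
  -- letter characterizations
  set sx : ℕ := if x.length ≠ 0 ∧ dx.rep 0 = true then 1 else 0 with hsx
  set sy : ℕ := if y.length ≠ 0 ∧ dy.rep 0 = true then 1 else 0 with hsy
  have hcharxp : ∀ j, dx.word[j]? = some a ↔ j ∈ (fun i => i + sx) '' Spx := by
    intro j
    have := word_letter hd dx 1 (Or.inl rfl) j
    rw [zpow_one] at this
    rw [this]
    simp only [Set.mem_image, hSpx, Set.mem_setOf_eq, hsx]
    constructor
    · rintro ⟨i, hi, rfl, hmem⟩; exact ⟨i, ⟨hi, hmem⟩, rfl⟩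
    · rintro ⟨i, ⟨hi, hmem⟩, rfl⟩; exact ⟨i, hi, rfl, hmem⟩
  have hcharxm : ∀ j, dx.word[j]? = some a⁻¹ ↔ j ∈ (fun i => i + sx) '' Smx := by
    intro j
    have := word_letter hd dx (-1) (Or.inr rfl) j
    rw [zpow_neg_one] at this
    rw [this]
    simp only [Set.mem_image, hSmx, Set.mem_setOf_eq, hsx]
    constructor
    · rintro ⟨i, hi, rfl, hmem⟩; exact ⟨i, ⟨hi, hmem⟩, rfl⟩
    · rintro ⟨i, ⟨hi, hmem⟩, rfl⟩; exact ⟨i, hi, rfl, hmem⟩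
  have hcharyp : ∀ j, dy.word[j]? = some a ↔ j ∈ (fun i => i + sy) '' Spy := by
    intro j
    have := word_letter hd dy 1 (Or.inl rfl) j
    rw [zpow_one] at this
    rw [this]
    simp only [Set.mem_image, hSpy, Set.mem_setOf_eq, hsy, hylen]
    constructor
    · rintro ⟨i, hi, rfl, hmem⟩; exact ⟨i, ⟨hi, hmem⟩, rfl⟩
    · rintro ⟨i, ⟨hi, hmem⟩, rfl⟩; exact ⟨i, hi, rfl, hmem⟩
  have hcharym : ∀ j, dy.word[j]? = some a⁻¹ ↔ j ∈ (fun i => i + sy) '' Smy := by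
    intro j
    have := word_letter hd dy (-1) (Or.inr rfl) j
    rw [zpow_neg_one] at this
    rw [this]
    simp only [Set.mem_image, hSmy, Set.mem_setOf_eq, hsy, hylen]
    constructor
    · rintro ⟨i, hi, rfl, hmem⟩; exact ⟨i, ⟨hi, hmem⟩, rfl⟩
    · rintro ⟨i, ⟨hi, hmem⟩, rfl⟩; exact ⟨i, hi, rfl, hmem⟩
  -- segment counts
  have hpkx : ∀ k, pk a dx.word k = (SegSet Spx k).ncard := fun k => by
    rw [pk_eq_segset a dx.word _ hcharxp k, segSet_shift_ncard]
  have hmkx : ∀ k, pk a⁻¹ dx.word k = (SegSet Smx k).ncard := fun k => by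
    rw [pk_eq_segset a⁻¹ dx.word _ hcharxm k, segSet_shift_ncard]
  have hpky : ∀ k, pk a dy.word k = (SegSet Smx k).ncard := fun k => by
    rw [pk_eq_segset a dy.word _ hcharyp k, segSet_shift_ncard, hSpyrev,
      segSet_rev_ncard n k Smx hSmxb]
  have hmky : ∀ k, pk a⁻¹ dy.word k = (SegSet Spx k).ncard := fun k => by
    rw [pk_eq_segset a⁻¹ dy.word _ hcharym k, segSet_shift_ncard, hSmyrev,
      segSet_rev_ncard n k Spx hSpxb]
  have hdk : ∀ k : ℕ, dk a dy.word k = - dk a dx.word k := by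
    intro k
    unfold dk mk'
    rw [hpkx, hmkx, hpky, hmky]
    ring
  refine ⟨hdk, ?_⟩
  have hrk : ∀ k, rk a dy.word k = rk a dx.word k := by
    intro k
    unfold rk
    rw [hdk k, Int.natAbs_neg]
  unfold segf
  set L := dx.word.length
  set L' := dy.word.length
  have hsum : ∀ (wrd : List G) (M : ℕ), wrd.length ≤ M →
      ∑ k ∈ Finset.Icc 1 wrd.length, rk a wrd k = ∑ k ∈ Finset.Icc 1 M, rk a wrd k := by
    intro wrd M hM
    apply Finset.sum_subset
    · intro k hk
      simp only [Finset.mem_Icc] at hk ⊢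
      omega
    · intro k hk hnk
      simp only [Finset.mem_Icc] at hk hnk
      exact rk_zero_of_lt a wrd k (by omega)
  rw [hsum dy.word (max L L') (le_max_right _ _), hsum dx.word (max L L') (le_max_left _ _)]
  exact Finset.sum_congr rfl (fun k _ => hrk k)

end Assemble

/-- Inverting interchanges `a`-segments and `a⁻¹`-segments: `d_k (g⁻¹) = - d_k (g)` for
all `k`, and in particular `f (g⁻¹) = f (g)`. -/
theorem segf_inv {G : Type*} [Group G] (G₁ G₂ H : Subgroup G) (a : G)
    (ham : IsAmalgam G₁ G₂ H) (ha : a ∈ (G₁ : Set G) ∪ (G₂ : Set G))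
    (hd : DCoset H a ≠ DCoset H a⁻¹)
    (g : G) (w w' : List G)
    (hw : IsSpecialForm G₁ G₂ H a g w) (hw' : IsSpecialForm G₁ G₂ H a g⁻¹ w') :
    (∀ k : ℕ, dk a w' k = - dk a w k) ∧ segf a w' = segf a w :=
  segf_inv' G₁ G₂ H a ham ha hd g w w' hw hw'
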